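/- Let n ≥ 1, t ≥ 0 and h ≥ 0 be integers and let u ∈ ℝ^{P_t(N)}. Suppose that for every S ⊆ N with |S| < h one has Σ_{π ∈ Π_S} P_π u = 0. Then for every Q ⊆ N with |Q| ≤ h − 1 or |Q| ≥ n − h + 1, one has u^⊤ Z_Q = Σ_{J ⊆ Q, |J| ≤ t} u_J = 0. -/
import Mathlib


abbrev Pidx (n t : ℕ) := {S : Finset (Fin n) // S.card ≤ t}

/-- Action of a permutation `π` of the ground set on the index set `P_t(N)`. -/
def permIdx (n t : ℕ) (π : Equiv.Perm (Fin n)) (I : Pidx n t) : Pidx n t :=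
  ⟨I.1.image π, by
    rw [Finset.card_image_of_injective _ π.injective]; exact I.2⟩

/-- if `Σ_{π ∈ Π_S} P_π u = 0` for every `S` with `|S| < h`, then
`u^⊤ Z_Q = Σ_{J ⊆ Q, |J| ≤ t} u_J = 0` for every `Q` with `|Q| ≤ h-1` or
`|Q| ≥ n-h+1`. -/
theorem stmt18 (n t h : ℕ) (hn : 1 ≤ n) (u : Pidx n t → ℝ)
    (hvanish : ∀ S : Finset (Fin n), S.card < h →
      (fun I : Pidx n t =>
        ∑ π ∈ Finset.univ.filter (fun π : Equiv.Perm (Fin n) => S.image ⇑π = S),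
          u (permIdx n t π I)) = 0) :
    ∀ Q : Finset (Fin n), (Q.card < h ∨ n + 1 ≤ Q.card + h) →
      ∑ J : Pidx n t, (if J.1 ⊆ Q then u J else 0) = 0 := by
  intro Q hQ
  obtain ⟨S, hScard, hSQ⟩ : ∃ S : Finset (Fin n), S.card < h ∧
      ∀ π : Equiv.Perm (Fin n), S.image ⇑π = S → Q.image ⇑π = Q := by
    rcases hQ with h1 | h2
    · exact ⟨Q, h1, fun π hπ => hπ⟩
    · refine ⟨Qᶜ, ?_, ?_⟩
      · have hc : Qᶜ.card = n - Q.card := by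
          simp [Finset.card_compl]
        have hle : Q.card ≤ n := by
          simpa using Finset.card_le_univ Q
        omega
      · intro π hπ
        have himg : ∀ (A : Finset (Fin n)) (x : Fin n),
            x ∈ A.image ⇑π ↔ π.symm x ∈ A := by
          intro A x
          simp only [Finset.mem_image]
          constructor
          · rintro ⟨a, ha, rfl⟩; simpa
          · intro hx; exact ⟨π.symm x, hx, by simp⟩
        have h1 : (Q.image ⇑π)ᶜ = Qᶜ := by
          rw [← hπ]
          ext x
          simp [Finset.mem_compl, himg]
        have := congrArg (·ᶜ) h1
        simpa using this
  set G := Finset.univ.filter (fun π : Equiv.Perm (Fin n) => S.image ⇑π = S) with hG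
  have hGne : (1 : Equiv.Perm (Fin n)) ∈ G := by simp [hG]
  have hv : ∀ I : Pidx n t, ∑ π ∈ G, u (permIdx n t π I) = 0 := by
    intro I
    have := congrFun (hvanish S hScard) I
    simpa using this
  have key : ∀ π ∈ G, (∑ J : Pidx n t, if J.1 ⊆ Q then u (permIdx n t π J) else 0)
      = ∑ J : Pidx n t, if J.1 ⊆ Q then u J else 0 := by
    intro π hπ
    have hQπ : Q.image ⇑π = Q := hSQ π (by simpa [hG] using hπ)
    have hbij : Function.Bijective (permIdx n t π) := by
      refine Finite.injective_iff_bijective.mp ?_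
      intro a b hab
      apply Subtype.ext
      have h2 := congrArg Subtype.val hab
      simp only [permIdx] at h2
      exact Finset.image_injective π.injective h2
    refine Fintype.sum_bijective _ hbij _ _ ?_
    intro J
    have hsub : J.1 ⊆ Q ↔ (permIdx n t π J).1 ⊆ Q := by
      simp only [permIdx]
      conv_rhs => rw [← hQπ]
      exact (Finset.image_subset_image_iff π.injective).symm
    by_cases hJ : J.1 ⊆ Q
    · rw [if_pos hJ, if_pos (hsub.mp hJ)]
    · rw [if_neg hJ, if_neg (fun hc => hJ (hsub.mpr hc))]
  have hsum : (G.card : ℝ) * (∑ J : Pidx n t, if J.1 ⊆ Q then u J else 0) = 0 := by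
    calc (G.card : ℝ) * (∑ J : Pidx n t, if J.1 ⊆ Q then u J else 0)
        = ∑ _π ∈ G, ∑ J : Pidx n t, (if J.1 ⊆ Q then u J else 0) := by
          rw [Finset.sum_const, nsmul_eq_mul]
      _ = ∑ π ∈ G, ∑ J : Pidx n t, (if J.1 ⊆ Q then u (permIdx n t π J) else 0) :=
          Finset.sum_congr rfl fun π hπ => (key π hπ).symm
      _ = ∑ J : Pidx n t, ∑ π ∈ G, (if J.1 ⊆ Q then u (permIdx n t π J) else 0) :=
          Finset.sum_comm
      _ = ∑ J : Pidx n t, (if J.1 ⊆ Q then ∑ π ∈ G, u (permIdx n t π J) else 0) := by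
          refine Finset.sum_congr rfl fun J _ => ?_
          split <;> simp
      _ = 0 := by
          refine Finset.sum_eq_zero fun J _ => ?_
          split
          · exact hv J
          · rfl
  have hGcard : (G.card : ℝ) ≠ 0 := by
    have : 0 < G.card := Finset.card_pos.mpr ⟨1, hGne⟩
    exact_mod_cast this.ne'
  exact (mul_eq_zero.mp hsum).resolve_left hGcard
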